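/- For a spherical cap C of angle θ ∈ (0, π/2) on the sphere of radius R = √(mN) in R^m, its surface area μ(C) = (2π^{(m-1)/2}/Γ((m-1)/2)) (mN)^{(m-2)/2} ∫₀^θ sin^{m-2}ρ dρ satisfies, for every ε > 0 and all sufficiently large m: 2^{(m/2)[log(2πeN sin²θ) − ε]} ≤ μ(C) ≤ 2^{(m/2)[log(2πeN sin²θ) + ε]}. -/

import Mathlib

set_option maxHeartbeats 1000000

open Real Filter Nat Set Topology


lemma fact_lower (n : ℕ) : ((n:ℝ)/Real.exp 1)^n ≤ (n ! : ℝ) := by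
  rcases Nat.eq_zero_or_pos n with h | h
  · subst h; simp
  rw [div_pow, div_le_iff₀ (by positivity), ← Real.exp_nat_mul, mul_one]
  have h1 : ((n:ℝ))^n / n ! ≤ Real.exp n :=
    le_trans (Finset.single_le_sum (f := fun i => (n:ℝ)^i / i !)
      (fun i _ => by positivity) (Finset.self_mem_range_succ n))
      (Real.sum_le_exp_of_nonneg (by positivity) _)
  calc ((n:ℝ))^n = ((n:ℝ)^n / n !) * n ! := by field_simp
  _ ≤ Real.exp n * n ! := mul_le_mul_of_nonneg_right h1 (by positivity)
  _ = (n ! : ℝ) * Real.exp n := by ring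

lemma fact_upper (n : ℕ) (hn : 1 ≤ n) : (n ! : ℝ) ≤ Real.exp 1 * n * ((n:ℝ)/Real.exp 1)^n := by
  have hn' : (1:ℝ) ≤ (n:ℝ) := by exact_mod_cast hn
  have hpos : (0:ℝ) < Real.sqrt (2*n) * ((n:ℝ)/Real.exp 1)^n := by positivity
  have hfact : (n ! : ℝ) = Stirling.stirlingSeq n * (Real.sqrt (2*n) * ((n:ℝ)/Real.exp 1)^n) := by
    rw [Stirling.stirlingSeq]; field_simp
  have hanti : Stirling.stirlingSeq n ≤ Stirling.stirlingSeq 1 := by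
    obtain ⟨k, rfl⟩ := Nat.exists_eq_add_of_le hn
    have := Stirling.stirlingSeq'_antitone (Nat.zero_le k)
    simpa [Function.comp, Nat.add_comm] using this
  have hsq : Real.sqrt (2*(n:ℝ)) ≤ Real.sqrt 2 * (n:ℝ) := by
    rw [Real.sqrt_mul (by norm_num)]
    have : Real.sqrt (n:ℝ) ≤ (n:ℝ) := by
      nth_rewrite 2 [← Real.sqrt_sq (by positivity : (0:ℝ) ≤ (n:ℝ))]
      exact Real.sqrt_le_sqrt (by nlinarith)
    nlinarith [Real.sqrt_nonneg (2:ℝ), Real.sqrt_nonneg ((n:ℝ))]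
  rw [hfact]
  calc Stirling.stirlingSeq n * (Real.sqrt (2*n) * ((n:ℝ)/Real.exp 1)^n)
      ≤ Stirling.stirlingSeq 1 * (Real.sqrt (2*n) * ((n:ℝ)/Real.exp 1)^n) :=
        mul_le_mul_of_nonneg_right hanti hpos.le
    _ = (Real.exp 1 / Real.sqrt 2) * (Real.sqrt (2*n) * ((n:ℝ)/Real.exp 1)^n) := by
        rw [Stirling.stirlingSeq_one]
    _ ≤ (Real.exp 1 / Real.sqrt 2) * ((Real.sqrt 2 * n) * ((n:ℝ)/Real.exp 1)^n) := by
        apply mul_le_mul_of_nonneg_left _ (by positivity)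
        exact mul_le_mul_of_nonneg_right hsq (by positivity)
    _ = Real.exp 1 * n * ((n:ℝ)/Real.exp 1)^n := by
        have h2 : Real.sqrt 2 ≠ 0 := by positivity
        field_simp

lemma hasDeriv_tlogt {t : ℝ} (ht : t ≠ 0) :
    HasDerivAt (fun t : ℝ => t * Real.log t - t) (Real.log t) t := by
  simpa using (Real.hasDerivAt_mul_log ht).fun_sub (hasDerivAt_id t)

lemma mono_tlogt : MonotoneOn (fun t : ℝ => t * Real.log t - t) (Set.Ici 1) := by
  apply monotoneOn_of_deriv_nonneg (convex_Ici 1)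
  · apply Continuous.continuousOn; fun_prop
  · intro t ht
    rw [interior_Ici] at ht
    exact (hasDeriv_tlogt (zero_lt_one.trans ht).ne').differentiableAt.differentiableWithinAt
  · intro t ht
    rw [interior_Ici] at ht
    rw [(hasDeriv_tlogt (zero_lt_one.trans ht).ne').deriv]
    exact Real.log_nonneg ht.le

lemma logGamma_upper {x : ℝ} (hx : 3 ≤ x) :
    Real.log (Real.Gamma x) ≤ 1 + Real.log x + (x * Real.log x - x) := by
  set n := ⌊x⌋₊ with hn
  have hx0 : (0:ℝ) < x := by linarith
  have hnx : (n:ℝ) ≤ x := Nat.floor_le hx0.le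
  have hxn : x < (n:ℝ) + 1 := Nat.lt_floor_add_one x
  have hn3 : 3 ≤ n := Nat.le_floor (by exact_mod_cast hx)
  have hn1 : (1:ℝ) ≤ (n:ℝ) := by exact_mod_cast Nat.one_le_iff_ne_zero.mpr (by omega)
  have hmono := Real.Gamma_strictMonoOn_Ici.monotoneOn
  have h1 : Real.Gamma x ≤ Real.Gamma ((n:ℝ)+1) := by
    apply hmono (by simp only [Set.mem_Ici]; linarith) (by simp only [Set.mem_Ici]; linarith)
    linarith
  have h2 : Real.Gamma ((n:ℝ)+1) = (n ! : ℝ) := Real.Gamma_nat_eq_factorial n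
  have h3 : Real.Gamma x ≤ Real.exp 1 * n * ((n:ℝ)/Real.exp 1)^n :=
    (h1.trans_eq h2).trans (fact_upper n (by omega))
  have hg : 0 < Real.Gamma x := Real.Gamma_pos_of_pos hx0
  calc Real.log (Real.Gamma x) ≤ Real.log (Real.exp 1 * n * ((n:ℝ)/Real.exp 1)^n) :=
        Real.log_le_log hg h3
    _ = 1 + Real.log n + ((n:ℝ) * Real.log n - n) := by
        rw [Real.log_mul (by positivity) (by positivity), Real.log_mul (by positivity) (by positivity),
          Real.log_pow, Real.log_div (by positivity) (by positivity), Real.log_exp]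
        ring
    _ ≤ 1 + Real.log x + (x * Real.log x - x) := by
        have hl : Real.log n ≤ Real.log x := Real.log_le_log (by linarith) hnx
        have hm : (n:ℝ) * Real.log n - n ≤ x * Real.log x - x :=
          mono_tlogt (Set.mem_Ici.mpr hn1) (Set.mem_Ici.mpr (by linarith)) hnx
        linarith

lemma logGamma_lower {x : ℝ} (hx : 3 ≤ x) :
    (x-2) * Real.log (x-2) - (x-2) ≤ Real.log (Real.Gamma x) := by
  have hx0 : (0:ℝ) < x := by linarith
  have hnx : ((⌊x⌋₊:ℕ):ℝ) ≤ x := Nat.floor_le hx0.le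
  have hxn : x < ((⌊x⌋₊:ℕ):ℝ) + 1 := Nat.lt_floor_add_one x
  have hn3 : 3 ≤ ⌊x⌋₊ := Nat.le_floor (by exact_mod_cast hx)
  have hmono := Real.Gamma_strictMonoOn_Ici.monotoneOn
  obtain ⟨k, hk⟩ : ∃ k, ⌊x⌋₊ = k + 1 := ⟨⌊x⌋₊ - 1, by omega⟩
  rw [hk] at hnx hxn hn3
  have hk2 : 2 ≤ k := by omega
  have hk2' : (2:ℝ) ≤ (k:ℝ) := by exact_mod_cast hk2
  have h1 : Real.Gamma ((k:ℝ)+1) ≤ Real.Gamma x := by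
    apply hmono (by simp only [Set.mem_Ici]; linarith) (by simp only [Set.mem_Ici]; linarith)
    · push_cast at hnx ⊢; linarith
  have h2 : ((k:ℝ)/Real.exp 1)^k ≤ Real.Gamma x := by
    calc ((k:ℝ)/Real.exp 1)^k ≤ (k ! : ℝ) := fact_lower k
    _ = Real.Gamma ((k:ℝ)+1) := (Real.Gamma_nat_eq_factorial k).symm
    _ ≤ Real.Gamma x := h1
  have hkx : x - 2 ≤ (k:ℝ) := by push_cast at hxn; linarith
  calc (x-2) * Real.log (x-2) - (x-2) ≤ (k:ℝ) * Real.log k - k :=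
        mono_tlogt (Set.mem_Ici.mpr (by linarith)) (Set.mem_Ici.mpr (by linarith)) hkx
    _ = Real.log (((k:ℝ)/Real.exp 1)^k) := by
        rw [Real.log_pow, Real.log_div (by positivity) (by positivity), Real.log_exp]; ring
    _ ≤ Real.log (Real.Gamma x) := Real.log_le_log (by positivity) h2



lemma tendsto_log_div : Tendsto (fun x : ℝ => Real.log x / x) atTop (𝓝 0) := by
  simpa [Function.comp] using Real.isLittleO_log_id_atTop.tendsto_div_nhds_zero

lemma tendsto_logGamma :
    Tendsto (fun x : ℝ => Real.log (Real.Gamma x) / x - (Real.log x - 1)) atTop (𝓝 0) := by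
  have hupper : Tendsto (fun x : ℝ => 1/x + Real.log x / x) atTop (𝓝 0) := by
    simpa using (tendsto_inv_atTop_zero.congr (fun x => (one_div x).symm)).add tendsto_log_div
  have hlower : Tendsto (fun x : ℝ =>
      Real.log (1 - 2/x) - 2*((Real.log (x-2)/(x-2)) * ((x-2)/x)) + 2/x) atTop (𝓝 0) := by
    have l1 : Tendsto (fun x : ℝ => 1 - 2/x) atTop (𝓝 1) := by
      have := (tendsto_inv_atTop_zero (𝕜 := ℝ)).const_mul (2:ℝ)
      simpa [div_eq_mul_inv] using (tendsto_const_nhds (x := (1:ℝ))).sub this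
    have l2 : Tendsto (fun x : ℝ => Real.log (1 - 2/x)) atTop (𝓝 0) := by
      have := (Real.continuousAt_log one_ne_zero).tendsto.comp l1
      simpa [Function.comp_def] using this
    have l3 : Tendsto (fun x : ℝ => Real.log (x-2)/(x-2)) atTop (𝓝 0) :=
      tendsto_log_div.comp (tendsto_atTop_add_const_right atTop (-2) tendsto_id)
    have l4 : Tendsto (fun x : ℝ => (x-2)/x) atTop (𝓝 1) := by
      apply l1.congr'
      filter_upwards [eventually_ne_atTop (0:ℝ)] with x hx
      field_simp
    have l5 : Tendsto (fun x : ℝ => 2/x) atTop (𝓝 0) := by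
      have := (tendsto_inv_atTop_zero (𝕜 := ℝ)).const_mul (2:ℝ)
      simpa [div_eq_mul_inv] using this
    have := (l2.sub ((l3.mul l4).const_mul 2)).add l5
    simpa using this
  apply tendsto_of_tendsto_of_tendsto_of_le_of_le' hlower hupper
  · filter_upwards [eventually_ge_atTop (3:ℝ)] with x hx
    have hx0 : (0:ℝ) < x := by linarith
    have h := logGamma_lower hx
    have key : ((x-2) * Real.log (x-2) - (x-2))/x - (Real.log x - 1)
        = Real.log (1 - 2/x) - 2*((Real.log (x-2)/(x-2)) * ((x-2)/x)) + 2/x := by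
      have h2 : (1:ℝ) - 2/x = (x-2)/x := by field_simp
      rw [h2, Real.log_div (by linarith : x - 2 ≠ 0) hx0.ne']
      have hx2 : x - 2 ≠ 0 := by linarith
      field_simp
      ring
    rw [← key]
    have : ((x-2) * Real.log (x-2) - (x-2))/x ≤ Real.log (Real.Gamma x) / x := by gcongr
    linarith
  · filter_upwards [eventually_ge_atTop (3:ℝ)] with x hx
    have hx0 : (0:ℝ) < x := by linarith
    have h := logGamma_upper hx
    have key : (1 + Real.log x + (x * Real.log x - x))/x - (Real.log x - 1) = 1/x + Real.log x / x := by
      field_simp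
      ring
    calc Real.log (Real.Gamma x) / x - (Real.log x - 1)
        ≤ (1 + Real.log x + (x * Real.log x - x))/x - (Real.log x - 1) := by
          have : Real.log (Real.Gamma x) / x ≤ (1 + Real.log x + (x * Real.log x - x))/x := by
            gcongr
          linarith
      _ = 1/x + Real.log x / x := key


variable {θ : ℝ}

lemma sin_int (k : ℕ) (a b : ℝ) : IntervalIntegrable (fun ρ => Real.sin ρ ^ k) MeasureTheory.volume a b :=
  (Real.continuous_sin.pow k).intervalIntegrable a b

lemma le_I (h1 : 0 < θ) (h2 : θ < π/2) {t : ℝ} (ht0 : 0 < t) (htθ : t < θ) (k : ℕ) :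
    (θ - t) * Real.sin t ^ k ≤ ∫ ρ in (0:ℝ)..θ, Real.sin ρ ^ k := by
  have hsplit := intervalIntegral.integral_add_adjacent_intervals (sin_int k 0 t) (sin_int k t θ)
  rw [← hsplit]
  have hA : (0:ℝ) ≤ ∫ ρ in (0:ℝ)..t, Real.sin ρ ^ k := by
    apply intervalIntegral.integral_nonneg ht0.le
    intro u hu
    exact pow_nonneg (Real.sin_nonneg_of_nonneg_of_le_pi hu.1 (by nlinarith [Real.pi_pos, hu.2])) k
  have hB : (θ - t) * Real.sin t ^ k ≤ ∫ ρ in t..θ, Real.sin ρ ^ k := by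
    have := intervalIntegral.integral_mono_on (f := fun _ => Real.sin t ^ k)
      (g := fun ρ => Real.sin ρ ^ k) htθ.le (intervalIntegrable_const) (sin_int k t θ) ?_
    · rwa [intervalIntegral.integral_const, smul_eq_mul] at this
    · intro u hu
      apply pow_le_pow_left₀ (Real.sin_nonneg_of_nonneg_of_le_pi ht0.le (by nlinarith [Real.pi_pos]))
      apply Real.strictMonoOn_sin.monotoneOn ⟨by linarith [Real.pi_pos], by linarith⟩
        ⟨by linarith [Real.pi_pos, hu.1], by linarith [hu.2]⟩ hu.1
  linarith

lemma I_pos (h1 : 0 < θ) (h2 : θ < π/2) (k : ℕ) :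
    0 < ∫ ρ in (0:ℝ)..θ, Real.sin ρ ^ k := by
  have := le_I h1 h2 (half_pos h1) (half_lt_self h1) k
  have hs : 0 < Real.sin (θ/2) := Real.sin_pos_of_pos_of_lt_pi (half_pos h1)
    (by nlinarith [Real.pi_pos])
  nlinarith [pow_pos hs k]

lemma I_le (h1 : 0 < θ) (h2 : θ < π/2) (k : ℕ) :
    (∫ ρ in (0:ℝ)..θ, Real.sin ρ ^ k) ≤ θ * Real.sin θ ^ k := by
  have := intervalIntegral.integral_mono_on (f := fun ρ => Real.sin ρ ^ k)
    (g := fun _ => Real.sin θ ^ k) h1.le (sin_int k 0 θ) intervalIntegrable_const ?_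
  · rwa [intervalIntegral.integral_const, smul_eq_mul, sub_zero] at this
  · intro u hu
    apply pow_le_pow_left₀ (Real.sin_nonneg_of_nonneg_of_le_pi hu.1 (by nlinarith [Real.pi_pos, hu.2]))
    apply Real.strictMonoOn_sin.monotoneOn
      ⟨by linarith [Real.pi_pos, hu.1], by linarith [hu.2]⟩
      ⟨by linarith [Real.pi_pos], by linarith⟩ hu.2

lemma tendsto_logI (h1 : 0 < θ) (h2 : θ < π/2) :
    Tendsto (fun k : ℕ => Real.log (∫ ρ in (0:ℝ)..θ, Real.sin ρ ^ k) / k) atTop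
      (𝓝 (Real.log (Real.sin θ))) := by
  have hsθ : 0 < Real.sin θ := Real.sin_pos_of_pos_of_lt_pi h1 (by nlinarith [Real.pi_pos])
  rw [tendsto_order]
  constructor
  · -- lower
    intro c hc
    -- find t ∈ (0, θ) with c < log (sin t)
    obtain ⟨t, ht0, htθ, htc⟩ : ∃ t, 0 < t ∧ t < θ ∧ c < Real.log (Real.sin t) := by
      have hcont : ContinuousAt (fun t => Real.log (Real.sin t)) θ :=
        (Real.continuousAt_log hsθ.ne').comp Real.continuous_sin.continuousAt
      have hev : ∀ᶠ t in 𝓝[<] θ, c < Real.log (Real.sin t) :=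
        (hcont.continuousWithinAt.eventually_const_lt hc)
      have hev2 : ∀ᶠ t in 𝓝[<] θ, t ∈ Set.Ioo (0:ℝ) θ :=
        Ioo_mem_nhdsLT_of_mem ⟨h1, le_refl θ⟩
      obtain ⟨t, h1', h2'⟩ := (hev.and hev2).exists
      exact ⟨t, h2'.1, h2'.2, h1'⟩
    have hst : 0 < Real.sin t := Real.sin_pos_of_pos_of_lt_pi ht0 (by nlinarith [Real.pi_pos])
    have hlow : Tendsto (fun k : ℕ => (Real.log (θ - t) + k * Real.log (Real.sin t)) / k) atTop
        (𝓝 (Real.log (Real.sin t))) := by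
      have : ∀ᶠ k : ℕ in atTop, (Real.log (θ - t) + k * Real.log (Real.sin t)) / k
          = Real.log (θ - t) * (1/(k:ℝ)) + Real.log (Real.sin t) := by
        filter_upwards [eventually_ge_atTop 1] with k hk
        have : (k:ℝ) ≠ 0 := by positivity
        field_simp
      rw [tendsto_congr' this]
      have := (tendsto_one_div_atTop_nhds_zero_nat).const_mul (Real.log (θ - t))
      simpa using this.add_const (Real.log (Real.sin t))
    filter_upwards [hlow.eventually_const_lt htc, eventually_ge_atTop 1] with k hk hk1
    refine lt_of_lt_of_le hk ?_
    apply div_le_div_of_nonneg_right  ?_ (by positivity)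
    · calc Real.log (θ - t) + k * Real.log (Real.sin t)
          = Real.log ((θ - t) * Real.sin t ^ k) := by
            rw [Real.log_mul (sub_pos.mpr htθ).ne' (pow_pos hst k).ne', Real.log_pow]
        _ ≤ Real.log (∫ ρ in (0:ℝ)..θ, Real.sin ρ ^ k) :=
            Real.log_le_log (mul_pos (sub_pos.mpr htθ) (pow_pos hst k)) (le_I h1 h2 ht0 htθ k)
  · -- upper
    intro c hc
    have hup : Tendsto (fun k : ℕ => (Real.log θ + k * Real.log (Real.sin θ)) / k) atTop
        (𝓝 (Real.log (Real.sin θ))) := by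
      have : ∀ᶠ k : ℕ in atTop, (Real.log θ + k * Real.log (Real.sin θ)) / k
          = Real.log θ * (1/(k:ℝ)) + Real.log (Real.sin θ) := by
        filter_upwards [eventually_ge_atTop 1] with k hk
        have : (k:ℝ) ≠ 0 := by positivity
        field_simp
      rw [tendsto_congr' this]
      have := (tendsto_one_div_atTop_nhds_zero_nat).const_mul (Real.log θ)
      simpa using this.add_const (Real.log (Real.sin θ))
    filter_upwards [hup.eventually_lt_const hc, eventually_ge_atTop 1] with k hk hk1
    refine lt_of_le_of_lt ?_ hk
    apply div_le_div_of_nonneg_right ?_ (by positivity)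
    calc Real.log (∫ ρ in (0:ℝ)..θ, Real.sin ρ ^ k)
        ≤ Real.log (θ * Real.sin θ ^ k) := Real.log_le_log (I_pos h1 h2 k) (I_le h1 h2 k)
      _ = Real.log θ + k * Real.log (Real.sin θ) := by
          rw [Real.log_mul (by positivity) (by positivity), Real.log_pow]



lemma tendsto_sub_div (c : ℝ) : Tendsto (fun m : ℕ => ((m:ℝ)-c)/(m:ℝ)) atTop (𝓝 1) := by
  have h := (tendsto_const_div_atTop_nhds_zero_nat c)
  have := (tendsto_const_nhds (x := (1:ℝ)) (f := atTop (α := ℕ))).sub h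
  rw [sub_zero] at this
  apply this.congr'
  filter_upwards [eventually_ge_atTop 1] with m hm
  have : (m:ℝ) ≠ 0 := by positivity
  field_simp

/-- exponential characterization of the surface area of a spherical cap of
angle `θ ∈ (0, π/2)` on the sphere of radius `√(mN)` in `ℝ^m`, whose area is
`(2π^{(m-1)/2}/Γ((m-1)/2)) (mN)^{(m-2)/2} ∫₀^θ sin^{m-2}ρ dρ`: for every `ε > 0` and all
sufficiently large `m` it lies between `2^{(m/2)(log₂(2πeN sin²θ) ∓ ε)}`. -/
theorem stmt_8 (N : ℝ) (hN : 0 < N) (θ : ℝ) (hθ : θ ∈ Set.Ioo 0 (π / 2)) :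
    ∀ ε : ℝ, 0 < ε → ∃ M : ℕ, ∀ m : ℕ, M ≤ m →
      (2 : ℝ) ^ (((m : ℝ) / 2) * (Real.logb 2 (2 * π * Real.exp 1 * N * Real.sin θ ^ 2) - ε)) ≤
        ((2 * π ^ (((m : ℝ) - 1) / 2) / Real.Gamma (((m : ℝ) - 1) / 2)) *
          ((m : ℝ) * N) ^ (((m : ℝ) - 2) / 2) * (∫ ρ in (0:ℝ)..θ, Real.sin ρ ^ (m - 2))) ∧
      (2 * π ^ (((m : ℝ) - 1) / 2) / Real.Gamma (((m : ℝ) - 1) / 2)) *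
          ((m : ℝ) * N) ^ (((m : ℝ) - 2) / 2) * (∫ ρ in (0:ℝ)..θ, Real.sin ρ ^ (m - 2)) ≤
        (2 : ℝ) ^ (((m : ℝ) / 2) * (Real.logb 2 (2 * π * Real.exp 1 * N * Real.sin θ ^ 2) + ε)) := by
  obtain ⟨hθ1, hθ2⟩ := hθ
  have hsθ : 0 < Real.sin θ := Real.sin_pos_of_pos_of_lt_pi hθ1 (by nlinarith [Real.pi_pos])
  set A : ℕ → ℝ := fun m => (2 * π ^ (((m : ℝ) - 1) / 2) / Real.Gamma (((m : ℝ) - 1) / 2)) *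
          ((m : ℝ) * N) ^ (((m : ℝ) - 2) / 2) * (∫ ρ in (0:ℝ)..θ, Real.sin ρ ^ (m - 2)) with hA
  set L : ℝ := Real.log (2 * π * Real.exp 1 * N * Real.sin θ ^ 2) with hLdef
  have hL : L = Real.log 2 + Real.log π + 1 + Real.log N + 2 * Real.log (Real.sin θ) := by
    have he : (2 * π * Real.exp 1 * N * Real.sin θ ^ 2)
        = 2 * (π * (Real.exp 1 * (N * (Real.sin θ ^ 2)))) := by ring
    rw [hLdef, he, Real.log_mul (by norm_num) (by positivity),
      Real.log_mul (by positivity) (by positivity),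
      Real.log_mul (Real.exp_ne_zero 1) (by positivity),
      Real.log_mul (by positivity) (by positivity), Real.log_exp, Real.log_pow]
    push_cast; ring
  -- positivity of A
  have hApos : ∀ m : ℕ, 2 ≤ m → 0 < A m := by
    intro m hm
    have hm1 : (2:ℝ) ≤ (m:ℝ) := by exact_mod_cast hm
    have hx : 0 < ((m:ℝ)-1)/2 := by linarith
    have hI := I_pos hθ1 hθ2 (m-2)
    have hΓ := Real.Gamma_pos_of_pos hx
    simp only [hA]
    have h1 : (0:ℝ) < π ^ (((m : ℝ) - 1) / 2) := Real.rpow_pos_of_pos Real.pi_pos _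
    have h2 : (0:ℝ) < ((m:ℝ) * N) ^ (((m : ℝ) - 2) / 2) :=
      Real.rpow_pos_of_pos (by positivity) _
    positivity
  -- main limit
  have hT : Tendsto (fun m : ℕ => Real.log (A m) * (2/(m:ℝ))) atTop (𝓝 L) := by
    -- pieces
    have hm2 : Tendsto (fun m : ℕ => (2:ℝ)/(m:ℝ)) atTop (𝓝 0) :=
      tendsto_const_div_atTop_nhds_zero_nat 2
    have hm3 : Tendsto (fun m : ℕ => Real.log (m:ℝ) / (m:ℝ)) atTop (𝓝 0) := by
      have : Tendsto (fun x : ℝ => Real.log x / x) atTop (𝓝 0) := by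
        simpa [Function.comp] using Real.isLittleO_log_id_atTop.tendsto_div_nhds_zero
      exact this.comp tendsto_natCast_atTop_atTop
    have hm4 : Tendsto (fun m : ℕ => Real.log ((m:ℝ)/((m:ℝ)-1))) atTop (𝓝 0) := by
      have hq : Tendsto (fun m : ℕ => (m:ℝ)/((m:ℝ)-1)) atTop (𝓝 1) := by
        have hinv : Tendsto (fun m : ℕ => ((m:ℝ)-1)⁻¹) atTop (𝓝 0) :=
          (tendsto_atTop_add_const_right atTop (-1) tendsto_natCast_atTop_atTop).inv_tendsto_atTop
        have := (tendsto_const_nhds (x := (1:ℝ)) (f := atTop (α := ℕ))).add hinv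
        rw [add_zero] at this
        apply this.congr'
        filter_upwards [eventually_ge_atTop 2] with m hm
        have h2 : (2:ℝ) ≤ (m:ℝ) := by exact_mod_cast hm
        have : (m:ℝ) - 1 ≠ 0 := by linarith
        field_simp
        ring
      have := (Real.continuousAt_log one_ne_zero).tendsto.comp hq
      simpa [Function.comp_def] using this
    have hxtop : Tendsto (fun m : ℕ => ((m:ℝ)-1)/2) atTop atTop :=
      (tendsto_atTop_add_const_right atTop (-1) tendsto_natCast_atTop_atTop).atTop_div_const
        two_pos
    have hm6 : Tendsto (fun m : ℕ =>
        Real.log (Real.Gamma (((m:ℝ)-1)/2)) / (((m:ℝ)-1)/2) - (Real.log (((m:ℝ)-1)/2) - 1))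
        atTop (𝓝 0) := tendsto_logGamma.comp hxtop
    have hm7 : Tendsto (fun m : ℕ =>
        Real.log (∫ ρ in (0:ℝ)..θ, Real.sin ρ ^ (m-2)) * (2/(m:ℝ))) atTop
        (𝓝 (2 * Real.log (Real.sin θ))) := by
      have base : Tendsto (fun m : ℕ =>
          Real.log (∫ ρ in (0:ℝ)..θ, Real.sin ρ ^ (m-2)) / ((m-2 : ℕ):ℝ)) atTop
          (𝓝 (Real.log (Real.sin θ))) := (tendsto_logI hθ1 hθ2).comp (tendsto_sub_atTop_nat 2)
      have factor : Tendsto (fun m : ℕ => 2 * ((m-2 : ℕ):ℝ) / (m:ℝ)) atTop (𝓝 2) := by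
        have := (tendsto_sub_div 2).const_mul (2:ℝ)
        rw [mul_one] at this
        apply this.congr'
        filter_upwards [eventually_ge_atTop 2] with m hm
        rw [Nat.cast_sub hm]
        push_cast
        ring
      have := base.mul factor
      rw [mul_comm] at this
      apply this.congr'
      filter_upwards [eventually_ge_atTop 3] with m hm
      have hm2' : ((m-2:ℕ):ℝ) ≠ 0 := by
        have : 1 ≤ m - 2 := by omega
        exact_mod_cast Nat.pos_iff_ne_zero.mp (by omega)
      have hm0 : (m:ℝ) ≠ 0 := by positivity
      field_simp
    -- the explicit limit expression H
    have hH : Tendsto (fun m : ℕ =>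
        Real.log 2 * (2/(m:ℝ))
        + Real.log π * (((m:ℝ)-1)/(m:ℝ))
        + Real.log N * (((m:ℝ)-2)/(m:ℝ))
        + (Real.log ((m:ℝ)/((m:ℝ)-1)) * (((m:ℝ)-1)/(m:ℝ)) - Real.log (m:ℝ)/(m:ℝ))
        + (Real.log 2 + 1) * (((m:ℝ)-1)/(m:ℝ))
        - (Real.log (Real.Gamma (((m:ℝ)-1)/2)) / (((m:ℝ)-1)/2) - (Real.log (((m:ℝ)-1)/2) - 1))
            * (((m:ℝ)-1)/(m:ℝ))
        + Real.log (∫ ρ in (0:ℝ)..θ, Real.sin ρ ^ (m-2)) * (2/(m:ℝ))) atTop (𝓝 L) := by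
      have t1 := hm2.const_mul (Real.log 2)
      have t2 := (tendsto_sub_div 1).const_mul (Real.log π)
      have t3 := (tendsto_sub_div 2).const_mul (Real.log N)
      have t4 := (hm4.mul (tendsto_sub_div 1)).sub hm3
      have t5 := (tendsto_sub_div 1).const_mul (Real.log 2 + 1)
      have t6 := hm6.mul (tendsto_sub_div 1)
      have := (((((t1.add t2).add t3).add t4).add t5).sub t6).add hm7
      convert this using 2
      rw [hL]; ring
    apply hH.congr'
    filter_upwards [eventually_ge_atTop 3] with m hm
    have hm3' : (3:ℝ) ≤ (m:ℝ) := by exact_mod_cast hm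
    have hm0 : (m:ℝ) ≠ 0 := by positivity
    have hm1 : (m:ℝ) - 1 ≠ 0 := by linarith
    have hx : 0 < ((m:ℝ)-1)/2 := by linarith
    have hΓ := Real.Gamma_pos_of_pos hx
    have hI := I_pos hθ1 hθ2 (m-2)
    have hπ : (0:ℝ) < π ^ (((m : ℝ) - 1) / 2) := Real.rpow_pos_of_pos Real.pi_pos _
    have hmN : (0:ℝ) < (m:ℝ) * N := by
      have : (0:ℝ) < (m:ℝ) := by linarith
      positivity
    have hlog : Real.log (A m) = Real.log 2 + (((m:ℝ)-1)/2) * Real.log π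
        - Real.log (Real.Gamma (((m:ℝ)-1)/2))
        + (((m:ℝ)-2)/2) * (Real.log (m:ℝ) + Real.log N)
        + Real.log (∫ ρ in (0:ℝ)..θ, Real.sin ρ ^ (m-2)) := by
      simp only [hA]
      rw [Real.log_mul (by positivity) hI.ne', Real.log_mul (by positivity) (by positivity),
        Real.log_div (by positivity) hΓ.ne', Real.log_mul (by norm_num) hπ.ne',
        Real.log_rpow Real.pi_pos, Real.log_rpow hmN,
        Real.log_mul (by linarith : (m:ℝ) ≠ 0) hN.ne']
    rw [hlog, Real.log_div (by linarith : (m:ℝ) ≠ 0) hm1,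
      Real.log_div hm1 (by norm_num : (2:ℝ) ≠ 0)]
    field_simp
    ring
  -- conclude
  intro ε hε
  have hεl : 0 < ε * Real.log 2 := mul_pos hε (Real.log_pos one_lt_two)
  obtain ⟨M0, hM0⟩ := (Metric.tendsto_atTop.1 hT) (ε * Real.log 2) hεl
  refine ⟨max M0 3, fun m hm => ?_⟩
  have hmM0 : M0 ≤ m := le_trans (le_max_left _ _) hm
  have hm3 : 3 ≤ m := le_trans (le_max_right _ _) hm
  have hm0 : (0:ℝ) < (m:ℝ) := by
    have : (3:ℝ) ≤ (m:ℝ) := by exact_mod_cast hm3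
    linarith
  have hAm : 0 < A m := hApos m (by omega)
  have hdist := hM0 m hmM0
  rw [Real.dist_eq, abs_lt] at hdist
  have hlow : ((m:ℝ)/2) * (L - ε * Real.log 2) ≤ Real.log (A m) := by
    have h1 : L - ε * Real.log 2 ≤ Real.log (A m) * (2/(m:ℝ)) := by linarith [hdist.1]
    calc ((m:ℝ)/2) * (L - ε * Real.log 2) = (L - ε * Real.log 2) * ((m:ℝ)/2) := by ring
      _ ≤ (Real.log (A m) * (2/(m:ℝ))) * ((m:ℝ)/2) :=
          mul_le_mul_of_nonneg_right h1 (by positivity)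
      _ = Real.log (A m) := by field_simp
  have hhigh : Real.log (A m) ≤ ((m:ℝ)/2) * (L + ε * Real.log 2) := by
    have h1 : Real.log (A m) * (2/(m:ℝ)) ≤ L + ε * Real.log 2 := by linarith [hdist.2]
    calc Real.log (A m) = (Real.log (A m) * (2/(m:ℝ))) * ((m:ℝ)/2) := by field_simp
      _ ≤ (L + ε * Real.log 2) * ((m:ℝ)/2) := mul_le_mul_of_nonneg_right h1 (by positivity)
      _ = ((m:ℝ)/2) * (L + ε * Real.log 2) := by ring
  have hkey : ∀ t : ℝ, ((2:ℝ) ^ t ≤ A m ↔ t * Real.log 2 ≤ Real.log (A m)) := by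
    intro t
    constructor
    · intro h
      have := Real.log_le_log (Real.rpow_pos_of_pos two_pos t) h
      rwa [Real.log_rpow two_pos] at this
    · intro h
      have h2 : t ≤ Real.logb 2 (A m) := by
        rw [Real.logb, le_div_iff₀ (Real.log_pos one_lt_two)]; exact h
      calc (2:ℝ)^t ≤ (2:ℝ)^(Real.logb 2 (A m)) :=
            Real.rpow_le_rpow_of_exponent_le one_le_two h2
        _ = A m := Real.rpow_logb two_pos (by norm_num) hAm
  have hkey2 : ∀ t : ℝ, (A m ≤ (2:ℝ) ^ t ↔ Real.log (A m) ≤ t * Real.log 2) := by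
    intro t
    constructor
    · intro h
      have := Real.log_le_log hAm h
      rwa [Real.log_rpow two_pos] at this
    · intro h
      have h2 : Real.logb 2 (A m) ≤ t := by
        rw [Real.logb, div_le_iff₀ (Real.log_pos one_lt_two)]; exact h
      calc A m = (2:ℝ)^(Real.logb 2 (A m)) := (Real.rpow_logb two_pos (by norm_num) hAm).symm
        _ ≤ (2:ℝ)^t := Real.rpow_le_rpow_of_exponent_le one_le_two h2
  have hLb : Real.logb 2 (2 * π * Real.exp 1 * N * Real.sin θ ^ 2) * Real.log 2 = L := by
    rw [Real.logb, hLdef, div_mul_cancel₀ _ (Real.log_pos one_lt_two).ne']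
  constructor
  · rw [show ((2 * π ^ (((m : ℝ) - 1) / 2) / Real.Gamma (((m : ℝ) - 1) / 2)) *
          ((m : ℝ) * N) ^ (((m : ℝ) - 2) / 2) * (∫ ρ in (0:ℝ)..θ, Real.sin ρ ^ (m - 2))) = A m
        from rfl]
    rw [hkey]
    calc ((m:ℝ)/2) * (Real.logb 2 (2 * π * Real.exp 1 * N * Real.sin θ ^ 2) - ε) * Real.log 2
        = ((m:ℝ)/2) * (L - ε * Real.log 2) := by rw [← hLb]; ring
      _ ≤ Real.log (A m) := hlow
  · rw [show ((2 * π ^ (((m : ℝ) - 1) / 2) / Real.Gamma (((m : ℝ) - 1) / 2)) *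
          ((m : ℝ) * N) ^ (((m : ℝ) - 2) / 2) * (∫ ρ in (0:ℝ)..θ, Real.sin ρ ^ (m - 2))) = A m
        from rfl]
    rw [hkey2]
    calc Real.log (A m) ≤ ((m:ℝ)/2) * (L + ε * Real.log 2) := hhigh
      _ = ((m:ℝ)/2) * (Real.logb 2 (2 * π * Real.exp 1 * N * Real.sin θ ^ 2) + ε) * Real.log 2 := by
          rw [← hLb]; ring
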